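/- Let d ≥ 2, α ∈ (0,1), δ ∈ (0, 1/(2α)), and let B ≥ 0 be a measurable collision kernel with B(z,ω) depending only on |z| and |z·ω|. Let f : ℝ^d → [δ, 1/α − δ] be measurable such that the function (v, v_*, ω) ↦ B(v−v_*, ω) is integrable against the relevant products of f and F(f) at the four velocities, so that Q(f) and the entropy production integral below are absolutely convergent. Then the entropy production of the anyon Boltzmann collision operator is nonpositive: ∫_{ℝ^d} Q(f)(v) · log( f(v)/F(f(v)) ) dv ≤ 0, with equality if and only if f(v') f(v'_*) F(f(v)) F(f(v_*)) = f(v) f(v_*) F(f(v')) F(f(v'_*)) holds B-almost everywhere. -/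

import Mathlib

open MeasureTheory Metric Set Filter

noncomputable section

/-- The anyon filling factor `F(f) = (1−αf)^α (1+(1−α)f)^{1−α}`. -/
def fillingFactor (α f : ℝ) : ℝ :=
  (1 - α * f) ^ α * (1 + (1 - α) * f) ^ (1 - α)

/-- Post-collisional velocity `v' = v − ω((v−v_*)·ω)`. -/
def vPost {d : ℕ} (v w ω : EuclideanSpace ℝ (Fin d)) : EuclideanSpace ℝ (Fin d) :=
  v - (inner ℝ (v - w) ω : ℝ) • ω

/-- Post-collisional velocity `v'_* = v_* + ω((v−v_*)·ω)`. -/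
def vPostStar {d : ℕ} (v w ω : EuclideanSpace ℝ (Fin d)) : EuclideanSpace ℝ (Fin d) :=
  w + (inner ℝ (v - w) ω : ℝ) • ω

/-- The bracket `f' f'_* F(f) F(f_*) − f f_* F(f') F(f'_*)` in the anyon collision
operator. -/
def anyonBracket {d : ℕ} (α : ℝ) (f : EuclideanSpace ℝ (Fin d) → ℝ)
    (v w ω : EuclideanSpace ℝ (Fin d)) : ℝ :=
  f (vPost v w ω) * f (vPostStar v w ω) * fillingFactor α (f v) * fillingFactor α (f w)
    - f v * f w * fillingFactor α (f (vPost v w ω)) * fillingFactor α (f (vPostStar v w ω))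

/-- The uniform probability measure on the unit sphere `S^{d−1}`. -/
def sphereUnif (d : ℕ) : Measure (sphere (0 : EuclideanSpace ℝ (Fin d)) 1) :=
  ((volume : Measure (EuclideanSpace ℝ (Fin d))).toSphere univ)⁻¹ •
    (volume : Measure (EuclideanSpace ℝ (Fin d))).toSphere

/-- The anyon (Haldane-statistics) Boltzmann collision operator. -/
def anyonQ {d : ℕ} (α : ℝ)
    (B : EuclideanSpace ℝ (Fin d) → EuclideanSpace ℝ (Fin d) → ℝ)
    (f : EuclideanSpace ℝ (Fin d) → ℝ) (v : EuclideanSpace ℝ (Fin d)) : ℝ :=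
  ∫ p : EuclideanSpace ℝ (Fin d) × sphere (0 : EuclideanSpace ℝ (Fin d)) 1,
    B (v - p.1) (p.2 : EuclideanSpace ℝ (Fin d))
      * anyonBracket α f v p.1 (p.2 : EuclideanSpace ℝ (Fin d))
    ∂((volume : Measure (EuclideanSpace ℝ (Fin d))).prod (sphereUnif d))

/-- The absolute-value counterpart of the collision bracket, used to state
integrability. -/
def anyonBracketAbs {d : ℕ} (α : ℝ) (f : EuclideanSpace ℝ (Fin d) → ℝ)
    (v w ω : EuclideanSpace ℝ (Fin d)) : ℝ :=
  f (vPost v w ω) * f (vPostStar v w ω) * fillingFactor α (f v) * fillingFactor α (f w)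
    + f v * f w * fillingFactor α (f (vPost v w ω)) * fillingFactor α (f (vPostStar v w ω))

/-! ### Auxiliary geometric lemmas -/

section Geom

variable {d : ℕ}

lemma vPost_swap (v w ω : EuclideanSpace ℝ (Fin d)) : vPost w v ω = vPostStar v w ω := by
  unfold vPost vPostStar
  rw [show w - v = -(v - w) by abel, inner_neg_left, neg_smul, sub_neg_eq_add]

lemma vPostStar_swap (v w ω : EuclideanSpace ℝ (Fin d)) : vPostStar w v ω = vPost v w ω := by
  unfold vPost vPostStar
  rw [show w - v = -(v - w) by abel, inner_neg_left, neg_smul, add_neg_eq_iff_eq_add]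
  abel

lemma inner_self_one {ω : EuclideanSpace ℝ (Fin d)} (hω : ‖ω‖ = 1) : (inner ℝ ω ω : ℝ) = 1 := by
  rw [real_inner_self_eq_norm_mul_norm, hω]; ring

lemma vPost_sub_vPostStar (v w ω : EuclideanSpace ℝ (Fin d)) :
    vPost v w ω - vPostStar v w ω = (v - w) - (2 * (inner ℝ (v-w) ω : ℝ)) • ω := by
  unfold vPost vPostStar
  rw [two_mul, add_smul]; abel

lemma inner_post {ω : EuclideanSpace ℝ (Fin d)} (hω : ‖ω‖ = 1) (v w : EuclideanSpace ℝ (Fin d)) :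
    (inner ℝ (vPost v w ω - vPostStar v w ω) ω : ℝ) = - (inner ℝ (v-w) ω : ℝ) := by
  rw [vPost_sub_vPostStar, inner_sub_left, real_inner_smul_left, inner_self_one hω]; ring

lemma norm_post {ω : EuclideanSpace ℝ (Fin d)} (hω : ‖ω‖ = 1) (v w : EuclideanSpace ℝ (Fin d)) :
    ‖vPost v w ω - vPostStar v w ω‖ = ‖v - w‖ := by
  have h2 : ‖vPost v w ω - vPostStar v w ω‖ ^ 2 = ‖v - w‖ ^ 2 := by
    rw [vPost_sub_vPostStar, norm_sub_sq_real, real_inner_smul_right, norm_smul]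
    simp [hω, abs_mul, mul_pow, sq_abs]
    ring
  have := norm_nonneg (vPost v w ω - vPostStar v w ω)
  have := norm_nonneg (v - w)
  nlinarith [h2]

lemma vPost_invol {ω : EuclideanSpace ℝ (Fin d)} (hω : ‖ω‖ = 1) (v w : EuclideanSpace ℝ (Fin d)) :
    vPost (vPost v w ω) (vPostStar v w ω) ω = v := by
  show vPost v w ω - (inner ℝ (vPost v w ω - vPostStar v w ω) ω : ℝ) • ω = v
  rw [inner_post hω, neg_smul, sub_neg_eq_add]
  unfold vPost; abel

lemma vPostStar_invol {ω : EuclideanSpace ℝ (Fin d)} (hω : ‖ω‖ = 1)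
    (v w : EuclideanSpace ℝ (Fin d)) :
    vPostStar (vPost v w ω) (vPostStar v w ω) ω = w := by
  show vPostStar v w ω + (inner ℝ (vPost v w ω - vPostStar v w ω) ω : ℝ) • ω = w
  rw [inner_post hω, neg_smul, add_neg_eq_iff_eq_add]
  unfold vPostStar; abel

lemma anyonBracket_comm (α : ℝ) (f : EuclideanSpace ℝ (Fin d) → ℝ)
    (v w ω : EuclideanSpace ℝ (Fin d)) :
    anyonBracket α f w v ω = anyonBracket α f v w ω := by
  unfold anyonBracket
  rw [vPostStar_swap, vPost_swap]; ring

lemma anyonBracket_post (α : ℝ) (f : EuclideanSpace ℝ (Fin d) → ℝ)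
    {ω : EuclideanSpace ℝ (Fin d)} (hω : ‖ω‖ = 1) (v w : EuclideanSpace ℝ (Fin d)) :
    anyonBracket α f (vPost v w ω) (vPostStar v w ω) ω = - anyonBracket α f v w ω := by
  unfold anyonBracket
  rw [vPost_invol hω, vPostStar_invol hω]; ring

end Geom

/-! ### The collision map as a measure-preserving linear map -/

section Lin

variable {d : ℕ}

/-- The collision map `(v,w) ↦ (v', w')` as a linear map. -/
def collLin (ω : EuclideanSpace ℝ (Fin d)) :
    (EuclideanSpace ℝ (Fin d) × EuclideanSpace ℝ (Fin d)) →ₗ[ℝ]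
      (EuclideanSpace ℝ (Fin d) × EuclideanSpace ℝ (Fin d)) where
  toFun x := (vPost x.1 x.2 ω, vPostStar x.1 x.2 ω)
  map_add' x y := by
    unfold vPost vPostStar
    have h : (inner ℝ (x.1 + y.1 - (x.2 + y.2)) ω : ℝ) =
        (inner ℝ (x.1-x.2) ω : ℝ) + (inner ℝ (y.1-y.2) ω : ℝ) := by
      rw [← inner_add_left]; congr 1; abel
    simp only [Prod.fst_add, Prod.snd_add, Prod.mk_add_mk, Prod.mk.injEq]
    rw [h]
    constructor <;> rw [add_smul] <;> abel
  map_smul' c x := by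
    unfold vPost vPostStar
    have h : ((inner ℝ (c • x.1 - c • x.2) ω : ℝ)) = c * (inner ℝ (x.1 - x.2) ω : ℝ) := by
      rw [← smul_sub, real_inner_smul_left]
    simp only [Prod.smul_fst, Prod.smul_snd, RingHom.id_apply, Prod.smul_mk, Prod.mk.injEq]
    rw [h]
    constructor <;> rw [mul_smul] <;> [rw [smul_sub]; rw [smul_add]]

lemma collLin_apply (ω : EuclideanSpace ℝ (Fin d))
    (x : EuclideanSpace ℝ (Fin d) × EuclideanSpace ℝ (Fin d)) :
    collLin ω x = (vPost x.1 x.2 ω, vPostStar x.1 x.2 ω) := rfl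

lemma collLin_invol {ω : EuclideanSpace ℝ (Fin d)} (hω : ‖ω‖ = 1) :
    (collLin ω).comp (collLin ω) = LinearMap.id :=
  LinearMap.ext fun x => Prod.ext (vPost_invol hω _ _) (vPostStar_invol hω _ _)

lemma collLin_det {ω : EuclideanSpace ℝ (Fin d)} (hω : ‖ω‖ = 1) :
    |LinearMap.det (collLin ω)| = 1 := by
  have h : LinearMap.det (collLin ω) * LinearMap.det (collLin ω) = 1 := by
    rw [← LinearMap.det_comp, collLin_invol hω, LinearMap.det_id]
  rcases mul_self_eq_one_iff.mp h with h1 | h1 <;> simp [h1]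

lemma collLin_map_volume {ω : EuclideanSpace ℝ (Fin d)} (hω : ‖ω‖ = 1) :
    Measure.map (collLin ω)
      ((volume : Measure (EuclideanSpace ℝ (Fin d))).prod
        (volume : Measure (EuclideanSpace ℝ (Fin d)))) =
      ((volume : Measure (EuclideanSpace ℝ (Fin d))).prod
        (volume : Measure (EuclideanSpace ℝ (Fin d)))) := by
  have hdet : LinearMap.det (collLin ω) ≠ 0 := by
    intro h0
    have := collLin_det hω
    rw [h0] at this; norm_num at this
  haveI := Measure.prod.instIsAddHaarMeasure (volume : Measure (EuclideanSpace ℝ (Fin d)))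
    (volume : Measure (EuclideanSpace ℝ (Fin d)))
  rw [Measure.map_linearMap_addHaar_eq_smul_addHaar _ hdet, abs_inv, collLin_det hω]
  simp

instance sphereUnif_finite (d : ℕ) : IsFiniteMeasure (sphereUnif d) := by
  constructor
  rw [sphereUnif, Measure.smul_apply, smul_eq_mul]
  exact lt_of_le_of_lt (ENNReal.inv_mul_le_one _) ENNReal.one_lt_top

end Lin

/-! ### Continuity lemmas -/

section Cont

variable {d : ℕ}

lemma continuous_vPost {X : Type*} [TopologicalSpace X] {a b c : X → EuclideanSpace ℝ (Fin d)}
    (ha : Continuous a) (hb : Continuous b) (hc : Continuous c) :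
    Continuous fun x => vPost (a x) (b x) (c x) := by
  unfold vPost
  exact ha.sub (((continuous_inner (𝕜 := ℝ)).comp ((ha.sub hb).prodMk hc)).smul hc)

lemma continuous_vPostStar {X : Type*} [TopologicalSpace X] {a b c : X → EuclideanSpace ℝ (Fin d)}
    (ha : Continuous a) (hb : Continuous b) (hc : Continuous c) :
    Continuous fun x => vPostStar (a x) (b x) (c x) := by
  unfold vPostStar
  exact hb.add (((continuous_inner (𝕜 := ℝ)).comp ((ha.sub hb).prodMk hc)).smul hc)

end Cont

/-! ### Measure-preserving symmetrisation maps -/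

section MP

abbrev ESp (d : ℕ) := EuclideanSpace ℝ (Fin d)
abbrev Sph (d : ℕ) := sphere (0 : ESp d) 1
abbrev fullMeasure (d : ℕ) : Measure (ESp d × (ESp d × Sph d)) :=
  ((volume : Measure (ESp d)).prod ((volume : Measure (ESp d)).prod (sphereUnif d)))

variable {d : ℕ}

lemma mp_T1 : MeasurePreserving
    (fun p : ESp d × (ESp d × Sph d) => (p.2.1, (p.1, p.2.2)))
    (fullMeasure d) (fullMeasure d) := by
  have mpA := measurePreserving_prodAssoc (volume : Measure (ESp d)) (volume : Measure (ESp d))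
    (sphereUnif d)
  have mpswap : MeasurePreserving (Prod.map Prod.swap (id : Sph d → Sph d))
      (((volume : Measure (ESp d)).prod (volume : Measure (ESp d))).prod (sphereUnif d))
      (((volume : Measure (ESp d)).prod (volume : Measure (ESp d))).prod (sphereUnif d)) :=
    MeasurePreserving.prod Measure.measurePreserving_swap (MeasurePreserving.id _)
  exact mpA.comp (mpswap.comp (mpA.symm MeasurableEquiv.prodAssoc))

lemma mp_T2 : MeasurePreserving
    (fun p : ESp d × (ESp d × Sph d) =>
      (vPost p.1 p.2.1 (p.2.2 : ESp d), (vPostStar p.1 p.2.1 (p.2.2 : ESp d), p.2.2)))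
    (fullMeasure d) (fullMeasure d) := by
  have mpA := measurePreserving_prodAssoc (volume : Measure (ESp d)) (volume : Measure (ESp d))
    (sphereUnif d)
  have hgm : Measurable (Function.uncurry fun (ω : Sph d) (x : ESp d × ESp d) =>
      collLin (ω : ESp d) x) := by
    have hcont : Continuous (Function.uncurry fun (ω : Sph d) (x : ESp d × ESp d) =>
        (vPost x.1 x.2 (ω : ESp d), vPostStar x.1 x.2 (ω : ESp d))) := by
      apply Continuous.prodMk
      · exact continuous_vPost (continuous_fst.comp continuous_snd)
          (continuous_snd.comp continuous_snd) (continuous_subtype_val.comp continuous_fst)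
      · exact continuous_vPostStar (continuous_fst.comp continuous_snd)
          (continuous_snd.comp continuous_snd) (continuous_subtype_val.comp continuous_fst)
    have heq : (Function.uncurry fun (ω : Sph d) (x : ESp d × ESp d) =>
        collLin (ω : ESp d) x) = Function.uncurry fun (ω : Sph d) (x : ESp d × ESp d) =>
        (vPost x.1 x.2 (ω : ESp d), vPostStar x.1 x.2 (ω : ESp d)) := by
      funext q; simp [Function.uncurry, collLin_apply]
    rw [heq]
    exact hcont.measurable
  have mskew : MeasurePreserving
      (fun q : Sph d × (ESp d × ESp d) => (q.1, collLin (q.1 : ESp d) q.2))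
      ((sphereUnif d).prod ((volume : Measure (ESp d)).prod (volume : Measure (ESp d))))
      ((sphereUnif d).prod ((volume : Measure (ESp d)).prod (volume : Measure (ESp d)))) := by
    exact (MeasurePreserving.id _).skew_product hgm (ae_of_all _ fun ω =>
      collLin_map_volume (mem_sphere_zero_iff_norm.mp ω.2))
  have mswap1 : MeasurePreserving (Prod.swap)
      ((((volume : Measure (ESp d)).prod (volume : Measure (ESp d)))).prod (sphereUnif d))
      ((sphereUnif d).prod ((volume : Measure (ESp d)).prod (volume : Measure (ESp d)))) :=
    Measure.measurePreserving_swap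
  have mswap2 : MeasurePreserving (Prod.swap)
      ((sphereUnif d).prod ((volume : Measure (ESp d)).prod (volume : Measure (ESp d))))
      ((((volume : Measure (ESp d)).prod (volume : Measure (ESp d)))).prod (sphereUnif d)) :=
    Measure.measurePreserving_swap
  have comp := mpA.comp (mswap2.comp (mskew.comp (mswap1.comp
    (mpA.symm MeasurableEquiv.prodAssoc))))
  have heq : (MeasurableEquiv.prodAssoc ∘ Prod.swap ∘
      (fun q : Sph d × (ESp d × ESp d) => (q.1, collLin (q.1 : ESp d) q.2)) ∘ Prod.swap ∘
      (MeasurableEquiv.prodAssoc :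
        (ESp d × ESp d) × Sph d ≃ᵐ ESp d × (ESp d × Sph d)).symm) =
      fun p : ESp d × (ESp d × Sph d) =>
      (vPost p.1 p.2.1 (p.2.2 : ESp d), (vPostStar p.1 p.2.1 (p.2.2 : ESp d), p.2.2)) := by
    funext p
    simp [Function.comp, MeasurableEquiv.prodAssoc, Equiv.prodAssoc, collLin_apply]
  rwa [heq] at comp

end MP

/-! ### Analytic lemmas -/

section Analytic

lemma fillingFactor_pos {α t : ℝ} (h1 : 0 < 1 - α * t) (h2 : 0 < 1 + (1 - α) * t) :
    0 < fillingFactor α t :=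
  mul_pos (Real.rpow_pos_of_pos h1 _) (Real.rpow_pos_of_pos h2 _)

lemma fillingFactor_continuous {α : ℝ} (h0 : 0 ≤ α) (h1 : α ≤ 1) :
    Continuous (fillingFactor α) := by
  apply Continuous.mul
  · exact Continuous.rpow_const (by continuity) fun x => Or.inr h0
  · exact Continuous.rpow_const (by continuity) fun x => Or.inr (by linarith)

lemma base_bounds {α δ t : ℝ} (hα : α ∈ Set.Ioo (0:ℝ) 1) (hδ : 0 < δ)
    (ht : t ∈ Set.Icc δ (1/α - δ)) : 0 < 1 - α * t ∧ 0 < 1 + (1 - α) * t := by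
  obtain ⟨hα0, hα1⟩ := hα
  obtain ⟨ht1, ht2⟩ := ht
  constructor
  · have : α * t ≤ α * (1/α - δ) := mul_le_mul_of_nonneg_left ht2 hα0.le
    have h3 : α * (1/α - δ) = 1 - α * δ := by field_simp
    nlinarith
  · nlinarith

lemma mul_log_sub_nonneg {G H : ℝ} (hG : 0 < G) (hH : 0 < H) :
    0 ≤ (G - H) * (Real.log G - Real.log H) := by
  rcases lt_trichotomy G H with h | h | h
  · have := Real.log_lt_log hG h
    nlinarith
  · simp [h]
  · have := Real.log_lt_log hH h
    nlinarith

lemma mul_log_sub_eq_zero {G H : ℝ} (hG : 0 < G) (hH : 0 < H)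
    (h : (G - H) * (Real.log G - Real.log H) = 0) : G = H := by
  rcases lt_trichotomy G H with h' | h' | h'
  · have := Real.log_lt_log hG h'
    nlinarith
  · exact h'
  · have := Real.log_lt_log hH h'
    nlinarith

lemma psi_bound {α δ : ℝ} (hα : α ∈ Set.Ioo (0:ℝ) 1) (hδ : 0 < δ) :
    ∃ M : ℝ, ∀ t ∈ Set.Icc δ (1/α - δ), |Real.log (t / fillingFactor α t)| ≤ M := by
  have hcont : ContinuousOn (fun t => Real.log (t / fillingFactor α t))
      (Set.Icc δ (1/α - δ)) := by
    apply ContinuousOn.comp Real.continuousOn_log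
    · exact (continuousOn_id.div (fillingFactor_continuous hα.1.le hα.2.le).continuousOn
        (fun t ht => (fillingFactor_pos (base_bounds hα hδ ht).1 (base_bounds hα hδ ht).2).ne'))
    · intro t ht
      have h1 := base_bounds hα hδ ht
      have := fillingFactor_pos h1.1 h1.2
      have ht0 : 0 < t := lt_of_lt_of_le hδ ht.1
      simp only [Set.mem_compl_iff, Set.mem_singleton_iff, id]
      positivity
  obtain ⟨M, hM⟩ := isCompact_Icc.exists_bound_of_continuousOn hcont
  exact ⟨M, fun t ht => by simpa using hM t ht⟩

end Analytic

/-- the H-theorem for the anyon Boltzmann equation: the entropy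
production `∫ Q(f) log(f/F(f))` is nonpositive, with equality if and only if the
collision bracket vanishes `B`-almost everywhere. -/
theorem anyon_H_theorem
    (d : ℕ) (hd : 2 ≤ d) (α : ℝ) (hα : α ∈ Set.Ioo (0 : ℝ) 1)
    (δ : ℝ) (hδ : δ ∈ Set.Ioo 0 (1 / (2 * α)))
    (B : EuclideanSpace ℝ (Fin d) → EuclideanSpace ℝ (Fin d) → ℝ)
    (hBpos : ∀ z ω, 0 ≤ B z ω)
    (hBmeas : Measurable fun p : EuclideanSpace ℝ (Fin d) × EuclideanSpace ℝ (Fin d) =>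
      B p.1 p.2)
    (hBsymm : ∀ z z' ω ω' : EuclideanSpace ℝ (Fin d),
      ‖z‖ = ‖z'‖ → |(inner ℝ z ω : ℝ)| = |(inner ℝ z' ω' : ℝ)| → B z ω = B z' ω')
    (f : EuclideanSpace ℝ (Fin d) → ℝ) (hfmeas : Measurable f)
    (hfrange : ∀ v, f v ∈ Set.Icc δ (1 / α - δ))
    (hint : Integrable
      (fun p : EuclideanSpace ℝ (Fin d) ×
          (EuclideanSpace ℝ (Fin d) × sphere (0 : EuclideanSpace ℝ (Fin d)) 1) =>
        B (p.1 - p.2.1) (p.2.2 : EuclideanSpace ℝ (Fin d))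
          * anyonBracketAbs α f p.1 p.2.1 (p.2.2 : EuclideanSpace ℝ (Fin d)))
      ((volume : Measure (EuclideanSpace ℝ (Fin d))).prod
        ((volume : Measure (EuclideanSpace ℝ (Fin d))).prod (sphereUnif d))))
    (hintH : Integrable (fun v => anyonQ α B f v * Real.log (f v / fillingFactor α (f v)))
      (volume : Measure (EuclideanSpace ℝ (Fin d)))) :
    (∫ v, anyonQ α B f v * Real.log (f v / fillingFactor α (f v)) ≤ 0)
    ∧ ((∫ v, anyonQ α B f v * Real.log (f v / fillingFactor α (f v))) = 0 ↔
        ∀ᵐ p : EuclideanSpace ℝ (Fin d) ×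
            (EuclideanSpace ℝ (Fin d) × sphere (0 : EuclideanSpace ℝ (Fin d)) 1)
          ∂((volume : Measure (EuclideanSpace ℝ (Fin d))).prod
            ((volume : Measure (EuclideanSpace ℝ (Fin d))).prod (sphereUnif d))),
          B (p.1 - p.2.1) (p.2.2 : EuclideanSpace ℝ (Fin d)) = 0 ∨
            anyonBracket α f p.1 p.2.1 (p.2.2 : EuclideanSpace ℝ (Fin d)) = 0) := by
  obtain ⟨hδ0, hδ1⟩ := hδ
  have hα0 := hα.1
  have hα1 := hα.2
  have fpos : ∀ v, 0 < f v := fun v => lt_of_lt_of_le hδ0 (hfrange v).1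
  have ffpos : ∀ v, 0 < fillingFactor α (f v) := fun v =>
    fillingFactor_pos (base_bounds hα hδ0 (hfrange v)).1 (base_bounds hα hδ0 (hfrange v)).2
  obtain ⟨M, hM⟩ := psi_bound hα hδ0
  have hM0 : 0 ≤ M := (abs_nonneg _).trans (hM _ (hfrange 0))
  set μ : Measure (ESp d × (ESp d × Sph d)) := fullMeasure d with hμdef
  set φ : ESp d → ℝ := fun v => Real.log (f v / fillingFactor α (f v)) with hφdef
  set Bk : ESp d × (ESp d × Sph d) → ℝ :=
    fun p => B (p.1 - p.2.1) (p.2.2 : ESp d) with hBkdef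
  set Br : ESp d × (ESp d × Sph d) → ℝ :=
    fun p => anyonBracket α f p.1 p.2.1 (p.2.2 : ESp d) with hBrdef
  set h : ESp d × (ESp d × Sph d) → ℝ := fun p => Bk p * Br p * φ p.1 with hhdef
  set Gf : ESp d × (ESp d × Sph d) → ℝ := fun p =>
    f (vPost p.1 p.2.1 (p.2.2 : ESp d)) * f (vPostStar p.1 p.2.1 (p.2.2 : ESp d)) *
      fillingFactor α (f p.1) * fillingFactor α (f p.2.1) with hGfdef
  set Hf : ESp d × (ESp d × Sph d) → ℝ := fun p =>
    f p.1 * f p.2.1 * fillingFactor α (f (vPost p.1 p.2.1 (p.2.2 : ESp d))) *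
      fillingFactor α (f (vPostStar p.1 p.2.1 (p.2.2 : ESp d))) with hHfdef
  set k : ESp d × (ESp d × Sph d) → ℝ := fun p =>
    Bk p * ((Gf p - Hf p) * (Real.log (Gf p) - Real.log (Hf p))) with hkdef
  set T1 : ESp d × (ESp d × Sph d) → ESp d × (ESp d × Sph d) :=
    fun p => (p.2.1, (p.1, p.2.2)) with hT1def
  set T2 : ESp d × (ESp d × Sph d) → ESp d × (ESp d × Sph d) :=
    fun p => (vPost p.1 p.2.1 (p.2.2 : ESp d), (vPostStar p.1 p.2.1 (p.2.2 : ESp d), p.2.2))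
    with hT2def
  have hωnorm : ∀ p : ESp d × (ESp d × Sph d), ‖(p.2.2 : ESp d)‖ = 1 := fun p =>
    mem_sphere_zero_iff_norm.mp p.2.2.2
  have hGpos : ∀ p, 0 < Gf p := fun p =>
    mul_pos (mul_pos (mul_pos (fpos _) (fpos _)) (ffpos _)) (ffpos _)
  have hHpos : ∀ p, 0 < Hf p := fun p =>
    mul_pos (mul_pos (mul_pos (fpos _) (fpos _)) (ffpos _)) (ffpos _)
  have hBrGH : ∀ p, Br p = Gf p - Hf p := fun p => rfl
  -- pointwise identities for the symmetrised kernel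
  have hBk1 : ∀ p, Bk (T1 p) = Bk p := fun p => by
    have : B (p.2.1 - p.1) (p.2.2 : ESp d) = B (p.1 - p.2.1) (p.2.2 : ESp d) := by
      apply hBsymm
      · rw [norm_sub_rev]
      · rw [show p.2.1 - p.1 = -(p.1 - p.2.1) by abel, inner_neg_left, abs_neg]
    exact this
  have hBk2 : ∀ p, Bk (T2 p) = Bk p := fun p => by
    have : B (vPost p.1 p.2.1 (p.2.2 : ESp d) - vPostStar p.1 p.2.1 (p.2.2 : ESp d))
        (p.2.2 : ESp d) = B (p.1 - p.2.1) (p.2.2 : ESp d) := by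
      apply hBsymm
      · exact norm_post (hωnorm p) _ _
      · rw [inner_post (hωnorm p), abs_neg]
    exact this
  have hBr1 : ∀ p, Br (T1 p) = Br p := fun p => anyonBracket_comm α f _ _ _
  have hBr2 : ∀ p, Br (T2 p) = -Br p := fun p => anyonBracket_post α f (hωnorm p) _ _
  have hh1 : ∀ p, h (T1 p) = Bk p * Br p * φ p.2.1 := fun p => by
    show Bk (T1 p) * Br (T1 p) * φ (T1 p).1 = _
    rw [hBk1, hBr1]
  have hh2 : ∀ p, h (T2 p) = Bk p * (-Br p) * φ (vPost p.1 p.2.1 (p.2.2 : ESp d)) := fun p => by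
    show Bk (T2 p) * Br (T2 p) * φ (T2 p).1 = _
    rw [hBk2, hBr2]
  have hh3 : ∀ p, h (T1 (T2 p)) =
      Bk p * (-Br p) * φ (vPostStar p.1 p.2.1 (p.2.2 : ESp d)) := fun p => by
    rw [hh1 (T2 p), hBk2, hBr2]
  have hφsum : ∀ p, φ p.1 + φ p.2.1 - φ (vPost p.1 p.2.1 (p.2.2 : ESp d))
      - φ (vPostStar p.1 p.2.1 (p.2.2 : ESp d)) = Real.log (Hf p) - Real.log (Gf p) := by
    intro p
    have lG : Real.log (Gf p) = Real.log (f (vPost p.1 p.2.1 (p.2.2 : ESp d)))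
        + Real.log (f (vPostStar p.1 p.2.1 (p.2.2 : ESp d)))
        + Real.log (fillingFactor α (f p.1)) + Real.log (fillingFactor α (f p.2.1)) := by
      show Real.log (_ * _ * _ * _) = _
      rw [Real.log_mul (mul_pos (mul_pos (fpos _) (fpos _)) (ffpos _)).ne' (ffpos _).ne',
        Real.log_mul (mul_pos (fpos _) (fpos _)).ne' (ffpos _).ne',
        Real.log_mul (fpos _).ne' (fpos _).ne']
    have lH : Real.log (Hf p) = Real.log (f p.1) + Real.log (f p.2.1)
        + Real.log (fillingFactor α (f (vPost p.1 p.2.1 (p.2.2 : ESp d))))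
        + Real.log (fillingFactor α (f (vPostStar p.1 p.2.1 (p.2.2 : ESp d)))) := by
      show Real.log (_ * _ * _ * _) = _
      rw [Real.log_mul (mul_pos (mul_pos (fpos _) (fpos _)) (ffpos _)).ne' (ffpos _).ne',
        Real.log_mul (mul_pos (fpos _) (fpos _)).ne' (ffpos _).ne',
        Real.log_mul (fpos _).ne' (fpos _).ne']
    have e1 : φ p.1 = Real.log (f p.1) - Real.log (fillingFactor α (f p.1)) :=
      Real.log_div (fpos _).ne' (ffpos _).ne'
    have e2 : φ p.2.1 = Real.log (f p.2.1) - Real.log (fillingFactor α (f p.2.1)) :=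
      Real.log_div (fpos _).ne' (ffpos _).ne'
    have e3 : φ (vPost p.1 p.2.1 (p.2.2 : ESp d)) =
        Real.log (f (vPost p.1 p.2.1 (p.2.2 : ESp d)))
          - Real.log (fillingFactor α (f (vPost p.1 p.2.1 (p.2.2 : ESp d)))) :=
      Real.log_div (fpos _).ne' (ffpos _).ne'
    have e4 : φ (vPostStar p.1 p.2.1 (p.2.2 : ESp d)) =
        Real.log (f (vPostStar p.1 p.2.1 (p.2.2 : ESp d)))
          - Real.log (fillingFactor α (f (vPostStar p.1 p.2.1 (p.2.2 : ESp d)))) :=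
      Real.log_div (fpos _).ne' (ffpos _).ne'
    rw [e1, e2, e3, e4, lG, lH]
    ring
  have hsum : ∀ p, h p + h (T1 p) + h (T2 p) + h (T1 (T2 p)) = -k p := by
    intro p
    rw [hh1 p, hh2 p, hh3 p]
    calc Bk p * Br p * φ p.1 + Bk p * Br p * φ p.2.1
          + Bk p * (-Br p) * φ (vPost p.1 p.2.1 (p.2.2 : ESp d))
          + Bk p * (-Br p) * φ (vPostStar p.1 p.2.1 (p.2.2 : ESp d))
        = Bk p * (Gf p - Hf p) * (φ p.1 + φ p.2.1 - φ (vPost p.1 p.2.1 (p.2.2 : ESp d))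
            - φ (vPostStar p.1 p.2.1 (p.2.2 : ESp d))) := by rw [← hBrGH p]; ring
      _ = Bk p * (Gf p - Hf p) * (Real.log (Hf p) - Real.log (Gf p)) := by rw [hφsum p]
      _ = -k p := by show _ = -(Bk p * ((Gf p - Hf p) * (Real.log (Gf p) - Real.log (Hf p)))); ring
  -- measurability
  have mvPost : Measurable fun p : ESp d × (ESp d × Sph d) =>
      vPost p.1 p.2.1 (p.2.2 : ESp d) :=
    (continuous_vPost continuous_fst (continuous_fst.comp continuous_snd)
      (continuous_subtype_val.comp (continuous_snd.comp continuous_snd))).measurable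
  have mvPostStar : Measurable fun p : ESp d × (ESp d × Sph d) =>
      vPostStar p.1 p.2.1 (p.2.2 : ESp d) :=
    (continuous_vPostStar continuous_fst (continuous_fst.comp continuous_snd)
      (continuous_subtype_val.comp (continuous_snd.comp continuous_snd))).measurable
  have mF : Measurable (fillingFactor α) := (fillingFactor_continuous hα0.le hα1.le).measurable
  have mBk : Measurable Bk := hBmeas.comp
    (((continuous_fst.sub (continuous_fst.comp continuous_snd)).prodMk
      (continuous_subtype_val.comp (continuous_snd.comp continuous_snd))).measurable)
  have mf1 : Measurable fun p : ESp d × (ESp d × Sph d) =>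
      f (vPost p.1 p.2.1 (p.2.2 : ESp d)) := hfmeas.comp mvPost
  have mf2 : Measurable fun p : ESp d × (ESp d × Sph d) =>
      f (vPostStar p.1 p.2.1 (p.2.2 : ESp d)) := hfmeas.comp mvPostStar
  have mfv : Measurable fun p : ESp d × (ESp d × Sph d) => f p.1 :=
    hfmeas.comp measurable_fst
  have mfw : Measurable fun p : ESp d × (ESp d × Sph d) => f p.2.1 :=
    hfmeas.comp (measurable_fst.comp measurable_snd)
  have mBr : Measurable Br := by
    rw [hBrdef]
    simp only [anyonBracket]
    exact (((mf1.mul mf2).mul (mF.comp mfv)).mul (mF.comp mfw)).sub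
      (((mfv.mul mfw).mul (mF.comp mf1)).mul (mF.comp mf2))
  have mφ1 : Measurable fun p : ESp d × (ESp d × Sph d) => φ p.1 :=
    Real.measurable_log.comp (mfv.div (mF.comp mfv))
  have mh : Measurable h := (mBk.mul mBr).mul mφ1
  -- integrability of h
  have habs : ∀ p, ‖h p‖ ≤ M * (B (p.1 - p.2.1) (p.2.2 : ESp d)
      * anyonBracketAbs α f p.1 p.2.1 (p.2.2 : ESp d)) := by
    intro p
    have h1 : |Br p| ≤ anyonBracketAbs α f p.1 p.2.1 (p.2.2 : ESp d) := by
      calc |Br p| ≤ |Gf p| + |Hf p| := abs_sub _ _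
        _ = Gf p + Hf p := by rw [abs_of_pos (hGpos p), abs_of_pos (hHpos p)]
        _ = anyonBracketAbs α f p.1 p.2.1 (p.2.2 : ESp d) := rfl
    have h2 : |φ p.1| ≤ M := hM _ (hfrange _)
    have h3 : 0 ≤ Bk p := hBpos _ _
    have h4 : (0:ℝ) ≤ anyonBracketAbs α f p.1 p.2.1 (p.2.2 : ESp d) :=
      le_trans (abs_nonneg _) h1
    have e : ‖h p‖ = Bk p * |Br p| * |φ p.1| := by
      show ‖Bk p * Br p * φ p.1‖ = _
      rw [Real.norm_eq_abs, abs_mul, abs_mul, abs_of_nonneg h3]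
    rw [e]
    have : Bk p * |Br p| * |φ p.1| ≤ Bk p * anyonBracketAbs α f p.1 p.2.1 (p.2.2 : ESp d) * M :=
      mul_le_mul (mul_le_mul_of_nonneg_left h1 h3) h2 (abs_nonneg _) (mul_nonneg h3 h4)
    calc Bk p * |Br p| * |φ p.1|
        ≤ Bk p * anyonBracketAbs α f p.1 p.2.1 (p.2.2 : ESp d) * M := this
      _ = M * (B (p.1 - p.2.1) (p.2.2 : ESp d)
          * anyonBracketAbs α f p.1 p.2.1 (p.2.2 : ESp d)) := by rw [hBkdef]; ring
  have hinth : Integrable h μ :=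
    (hint.const_mul M).mono' mh.aestronglyMeasurable (ae_of_all _ habs)
  -- the entropy production equals the integral of h
  have hQ : ∀ v, anyonQ α B f v * Real.log (f v / fillingFactor α (f v)) =
      ∫ q : ESp d × Sph d, h (v, q)
        ∂((volume : Measure (ESp d)).prod (sphereUnif d)) := by
    intro v
    have e1 : anyonQ α B f v = ∫ q : ESp d × Sph d,
        B (v - q.1) (q.2 : ESp d) * anyonBracket α f v q.1 (q.2 : ESp d)
        ∂((volume : Measure (ESp d)).prod (sphereUnif d)) := rfl
    rw [e1, ← integral_mul_const]
  have hD : (∫ v, anyonQ α B f v * Real.log (f v / fillingFactor α (f v))) =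
      ∫ p, h p ∂μ := by
    simp_rw [hQ]
    exact (MeasureTheory.integral_prod _ hinth).symm
  -- invariance of the integral of h under the symmetrisations
  have hinv : ∀ (T : ESp d × (ESp d × Sph d) → ESp d × (ESp d × Sph d)),
      MeasurePreserving T μ μ → (∫ p, h (T p) ∂μ) = ∫ p, h p ∂μ := by
    intro T hT
    have hsm : AEStronglyMeasurable h (Measure.map T μ) := by
      rw [hT.map_eq]; exact mh.aestronglyMeasurable
    calc (∫ p, h (T p) ∂μ) = ∫ p, h p ∂(Measure.map T μ) :=
          (integral_map hT.measurable.aemeasurable hsm).symm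
      _ = ∫ p, h p ∂μ := by rw [hT.map_eq]
  have hintT : ∀ (T : ESp d × (ESp d × Sph d) → ESp d × (ESp d × Sph d)),
      MeasurePreserving T μ μ → Integrable (fun p => h (T p)) μ := by
    intro T hT
    have : Integrable h (Measure.map T μ) := by rw [hT.map_eq]; exact hinth
    have hsm : AEStronglyMeasurable h (Measure.map T μ) := by
      rw [hT.map_eq]; exact mh.aestronglyMeasurable
    exact (integrable_map_measure hsm hT.measurable.aemeasurable).mp this
  have hT1mp : MeasurePreserving T1 μ μ := mp_T1
  have hT2mp : MeasurePreserving T2 μ μ := mp_T2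
  have hT3mp : MeasurePreserving (T1 ∘ T2) μ μ := hT1mp.comp hT2mp
  have hi1 : Integrable (fun p => h (T1 p)) μ := hintT _ hT1mp
  have hi2 : Integrable (fun p => h (T2 p)) μ := hintT _ hT2mp
  have hi3 : Integrable (fun p => h (T1 (T2 p))) μ := hintT _ hT3mp
  have hI1 : (∫ p, h (T1 p) ∂μ) = ∫ p, h p ∂μ := hinv _ hT1mp
  have hI2 : (∫ p, h (T2 p) ∂μ) = ∫ p, h p ∂μ := hinv _ hT2mp
  have hI3 : (∫ p, h (T1 (T2 p)) ∂μ) = ∫ p, h p ∂μ := hinv _ hT3mp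
  have hIk : (∫ p, k p ∂μ) = -(4 * ∫ p, h p ∂μ) := by
    have e : (∫ p, k p ∂μ) = -∫ p, (h p + h (T1 p) + h (T2 p) + h (T1 (T2 p))) ∂μ := by
      rw [← integral_neg]
      apply integral_congr_ae (ae_of_all _ fun p => ?_)
      have := hsum p
      show k p = -(h p + h (T1 p) + h (T2 p) + h (T1 (T2 p)))
      linarith
    have s1 : Integrable (fun p => h p + h (T1 p)) μ := hinth.add hi1
    have s2 : Integrable (fun p => h p + h (T1 p) + h (T2 p)) μ := s1.add hi2
    have e3 : (∫ p, (h p + h (T1 p) + h (T2 p) + h (T1 (T2 p))) ∂μ) =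
        (∫ p, (h p + h (T1 p) + h (T2 p)) ∂μ) + ∫ p, h (T1 (T2 p)) ∂μ := integral_add s2 hi3
    have e4 : (∫ p, (h p + h (T1 p) + h (T2 p)) ∂μ) =
        (∫ p, (h p + h (T1 p)) ∂μ) + ∫ p, h (T2 p) ∂μ := integral_add s1 hi2
    have e5 : (∫ p, (h p + h (T1 p)) ∂μ) = (∫ p, h p ∂μ) + ∫ p, h (T1 p) ∂μ :=
      integral_add hinth hi1
    rw [e, e3, e4, e5, hI1, hI2, hI3]
    ring
  have hknn : ∀ p, 0 ≤ k p := fun p =>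
    mul_nonneg (hBpos _ _) (mul_log_sub_nonneg (hGpos p) (hHpos p))
  have hik : Integrable k μ := by
    have : Integrable (fun p => -(h p + h (T1 p) + h (T2 p) + h (T1 (T2 p)))) μ :=
      (((hinth.add hi1).add hi2).add hi3).neg
    exact this.congr (ae_of_all _ fun p => by
      show -(h p + h (T1 p) + h (T2 p) + h (T1 (T2 p))) = k p
      have := hsum p; linarith)
  have hknni : 0 ≤ ∫ p, k p ∂μ := integral_nonneg hknn
  rw [hD]
  constructor
  · linarith [hIk]
  · constructor
    · intro h0
      have hk0 : (∫ p, k p ∂μ) = 0 := by linarith [hIk]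
      have hkae : k =ᵐ[μ] 0 :=
        (integral_eq_zero_iff_of_nonneg hknn hik).mp hk0
      filter_upwards [hkae] with p hp
      have hp' : Bk p * ((Gf p - Hf p) * (Real.log (Gf p) - Real.log (Hf p))) = 0 := hp
      rcases mul_eq_zero.mp hp' with hB0 | hX
      · exact Or.inl hB0
      · refine Or.inr ?_
        have hGH := mul_log_sub_eq_zero (hGpos p) (hHpos p) hX
        show anyonBracket α f p.1 p.2.1 (p.2.2 : ESp d) = 0
        have : Br p = 0 := by rw [hBrGH p, hGH, sub_self]
        exact this
    · intro hae
      have hz : h =ᵐ[μ] 0 := by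
        filter_upwards [hae] with p hp
        rcases hp with hB0 | hbr0
        · have : Bk p = 0 := hB0
          show Bk p * Br p * φ p.1 = 0
          rw [this]; ring
        · have : Br p = 0 := hbr0
          show Bk p * Br p * φ p.1 = 0
          rw [this]; ring
      rw [integral_congr_ae hz]
      simp


end
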